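/- arXiv:2204.01339 — 2 statements merged into one kernel-verified Lean document; each statement's English description precedes it below -/
import Mathlib

section
/- Let v : EuclideanSpace ℝ (Fin 2) → ℝ be continuously differentiable. Let z_a ≠ z_b be points of the plane, h = ‖z_b − z_a‖, t = h⁻¹ • (z_b − z_a) the unit tangent, and n the unit normal obtained from t by the clockwise quarter rotation (n has coordinates (t₂, −t₁)). Then h • ∫ τ in (0,1), ∇v(z_a + τ • (z_b − z_a)) = (h * ∫ τ in (0,1), ⟪∇v(z_a + τ • (z_b − z_a)), n⟫) • n + (v z_b − v z_a) • t, where ∇v denotes the gradient. (The line integral of the gradient along an edge decomposes into the normal-derivative moment times n plus the tangential jump v(z_{i+1}) − v(z_i) times t; this is the identity ∫_{∂K}∇v ds = ∑_e n_e ∫_e ∂_n v ds + ∑_i t_{e_i}(v(z_{i+1}) − v(z_i)) on a single edge.) -/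
open MeasureTheory

/-- The line integral of the gradient along an edge decomposes into the
normal-derivative moment times the unit normal `n` plus the tangential jump
`v(z_b) − v(z_a)` times the unit tangent `t`. -/
theorem edge_gradient_decomposition
    (v : EuclideanSpace ℝ (Fin 2) → ℝ) (hv : ContDiff ℝ 1 v)
    (za zb : EuclideanSpace ℝ (Fin 2)) (hne : za ≠ zb)
    (h : ℝ) (hh : h = ‖zb - za‖)
    (t n : EuclideanSpace ℝ (Fin 2))
    (ht : t = h⁻¹ • (zb - za))
    (hn0 : n 0 = t 1) (hn1 : n 1 = -t 0) :
    h • (∫ τ in Set.Ioo (0:ℝ) 1, gradient v (za + τ • (zb - za))) =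
      (h * ∫ τ in Set.Ioo (0:ℝ) 1,
          (inner ℝ (gradient v (za + τ • (zb - za))) n : ℝ)) • n
        + (v zb - v za) • t := by
  have hd : zb - za ≠ 0 := sub_ne_zero.mpr (Ne.symm hne)
  have hpos : (0:ℝ) < h := by rw [hh]; exact norm_pos_iff.mpr hd
  set d := zb - za with hdd
  set g : ℝ → EuclideanSpace ℝ (Fin 2) := fun τ => gradient v (za + τ • d) with hg
  -- continuity of gradient
  have hgrad_cont : Continuous (gradient v) := by
    have h1 : Continuous fun x => (InnerProductSpace.toDual ℝ (EuclideanSpace ℝ (Fin 2))).symm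
        (fderiv ℝ v x) :=
      (InnerProductSpace.toDual ℝ _).symm.continuous.comp (hv.continuous_fderiv one_ne_zero)
    exact h1
  have hcurve : Continuous fun τ : ℝ => za + τ • d := by continuity
  have hgc : Continuous g := hgrad_cont.comp hcurve
  have hgint : IntegrableOn g (Set.Ioo (0:ℝ) 1) :=
    (hgc.integrableOn_Icc).mono_set Set.Ioo_subset_Icc_self
  set I := ∫ τ in Set.Ioo (0:ℝ) 1, g τ with hI
  -- inner ℝ integrals
  have hinner : ∀ w : EuclideanSpace ℝ (Fin 2),
      (∫ τ in Set.Ioo (0:ℝ) 1, (inner ℝ (g τ) w : ℝ)) = inner ℝ I w := by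
    intro w
    calc (∫ τ in Set.Ioo (0:ℝ) 1, (inner ℝ (g τ) w : ℝ))
        = ∫ τ in Set.Ioo (0:ℝ) 1, (inner ℝ w (g τ) : ℝ) := by
          simp_rw [real_inner_comm]
      _ = inner ℝ w I := integral_inner hgint w
      _ = inner ℝ I w := real_inner_comm _ _
  -- gradient-fderiv relation
  have hgradf : ∀ x y : EuclideanSpace ℝ (Fin 2), (inner ℝ (gradient v x) y : ℝ) = fderiv ℝ v x y := by
    intro x y
    simp [gradient, InnerProductSpace.toDual_symm_apply]
  -- FTC along the edge
  have hderiv : ∀ τ : ℝ, HasDerivAt (fun s => v (za + s • d)) (inner ℝ (g τ) d : ℝ) τ := by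
    intro τ
    have h1 : HasDerivAt (fun s : ℝ => za + s • d) d τ := by
      simpa using ((hasDerivAt_id τ).smul_const d).const_add za
    have h2 := ((hv.differentiable one_ne_zero) (za + τ • d)).hasFDerivAt
    have := h2.comp_hasDerivAt τ h1
    simp only [hg, hgradf]
    exact this
  have hftc : (∫ τ in Set.Ioo (0:ℝ) 1, (inner ℝ (g τ) d : ℝ)) = v zb - v za := by
    have hcont : Continuous fun τ : ℝ => (inner ℝ (g τ) d : ℝ) :=
      (hgc.inner continuous_const)
    have := intervalIntegral.integral_eq_sub_of_hasDerivAt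
      (f := fun s => v (za + s • d)) (a := 0) (b := 1)
      (fun τ _ => hderiv τ) (hcont.intervalIntegrable 0 1)
    rw [intervalIntegral.integral_of_le zero_le_one, integral_Ioc_eq_integral_Ioo] at this
    simpa [hdd] using this
  -- t is a unit vector
  have hht : h • t = d := by rw [ht, smul_smul, mul_inv_cancel₀ (ne_of_gt hpos), one_smul]
  have hnt : ‖t‖ = 1 := by
    rw [ht, norm_smul, ← hh, norm_inv, Real.norm_eq_abs, abs_of_pos hpos,
      inv_mul_cancel₀ (ne_of_gt hpos)]
  have hts : t 0 ^ 2 + t 1 ^ 2 = 1 := by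
    have : (inner ℝ t t : ℝ) = 1 := by
      rw [real_inner_self_eq_norm_sq, hnt]; norm_num
    rw [PiLp.inner_apply, Fin.sum_univ_two] at this
    simp only [RCLike.inner_apply, conj_trivial] at this
    linear_combination this
  -- decomposition of any vector in basis (t, n)
  have hdecomp : ∀ w : EuclideanSpace ℝ (Fin 2),
      w = (inner ℝ w n : ℝ) • n + (inner ℝ w t : ℝ) • t := by
    intro w
    have e0 : (inner ℝ w n : ℝ) = w 0 * t 1 - w 1 * t 0 := by
      simp [PiLp.inner_apply, Fin.sum_univ_two, hn0, hn1, RCLike.inner_apply]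
      try ring
    have e1 : (inner ℝ w t : ℝ) = w 0 * t 0 + w 1 * t 1 := by
      simp [PiLp.inner_apply, Fin.sum_univ_two, RCLike.inner_apply]
      try ring
    ext i
    fin_cases i
    · simp [e0, e1, hn0, hn1, PiLp.smul_apply, PiLp.add_apply]
      linear_combination (-(w 0)) * hts
    · simp [e0, e1, hn0, hn1, PiLp.smul_apply, PiLp.add_apply]
      linear_combination (-(w 1)) * hts
  -- final assembly
  have htan : v zb - v za = h * (inner ℝ I t : ℝ) := by
    rw [← hftc, ← hht]
    rw [hinner (h • t)]
    simp [real_inner_smul_right]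
  calc h • I = h • ((inner ℝ I n : ℝ) • n + (inner ℝ I t : ℝ) • t) := by rw [← hdecomp I]
    _ = (h * (inner ℝ I n : ℝ)) • n + (h * (inner ℝ I t : ℝ)) • t := by
        rw [smul_add, smul_smul, smul_smul]
    _ = (h * ∫ τ in Set.Ioo (0:ℝ) 1, (inner ℝ (g τ) n : ℝ)) • n + (v zb - v za) • t := by
        rw [hinner n, htan]
end

section
/- Let V be a real vector space, a : V → V → ℝ a bilinear form, and ℓ : V →ₗ[ℝ] ℝ a linear functional. Let (X, μ) be a measure space, g : X → ℝ a measurable function with g ≥ 0 almost everywhere, and T : V →ₗ[ℝ] (X → ℝ) a linear map such that T v is measurable and g * |T v| is integrable for every v ∈ V. Let u ∈ V and suppose there exists a measurable λ : X → ℝ with |λ| ≤ 1 almost everywhere, λ * (T u) = |T u| almost everywhere, g * λ * (T v) integrable for every v, and a u v + ∫ g λ (T v) dμ = ℓ v for all v ∈ V. Then u solves the variational inequality of the second kind: for all v ∈ V, a u (v − u) + ∫ g |T v| dμ − ∫ g |T u| dμ ≥ ℓ (v − u). (A solution of the Lagrange-multiplier formulation of the simplified friction problem solves the original variational inequality.)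 -/
open MeasureTheory

/-- A solution of the Lagrange-multiplier formulation of the simplified friction
problem solves the original variational inequality of the second kind. -/
theorem lagrange_solution_solves_variational_inequality
    {V : Type*} [AddCommGroup V] [Module ℝ V]
    (a : V →ₗ[ℝ] V →ₗ[ℝ] ℝ) (ℓ : V →ₗ[ℝ] ℝ)
    {X : Type*} [MeasurableSpace X] (μ : Measure X)
    (g : X → ℝ) (hgmeas : Measurable g) (hg : 0 ≤ᵐ[μ] g)
    (T : V →ₗ[ℝ] (X → ℝ))
    (hTmeas : ∀ v, Measurable (T v))
    (hTint : ∀ v, Integrable (fun x => g x * |T v x|) μ)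
    (u : V) (lam : X → ℝ) (hlammeas : Measurable lam)
    (hlam1 : ∀ᵐ x ∂μ, |lam x| ≤ 1)
    (hlamu : ∀ᵐ x ∂μ, lam x * T u x = |T u x|)
    (hint : ∀ v, Integrable (fun x => g x * lam x * T v x) μ)
    (heq : ∀ v, a u v + ∫ x, g x * lam x * T v x ∂μ = ℓ v) :
    ∀ v, a u (v - u) + (∫ x, g x * |T v x| ∂μ) - (∫ x, g x * |T u x| ∂μ) ≥
      ℓ (v - u) := by
  intro v
  have key := heq (v - u)
  -- rewrite the integral for v - u as difference
  have hTvu : (fun x => g x * lam x * T (v - u) x)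
      = fun x => g x * lam x * T v x - g x * lam x * T u x := by
    funext x
    have : T (v - u) x = T v x - T u x := by
      rw [map_sub]; rfl
    rw [this]; ring
  have hsplit : ∫ x, g x * lam x * T (v - u) x ∂μ
      = (∫ x, g x * lam x * T v x ∂μ) - ∫ x, g x * lam x * T u x ∂μ := by
    rw [hTvu, integral_sub (hint v) (hint u)]
  -- ∫ g λ Tu = ∫ g |Tu|
  have hu : ∫ x, g x * lam x * T u x ∂μ = ∫ x, g x * |T u x| ∂μ := by
    refine integral_congr_ae ?_
    filter_upwards [hlamu] with x hx
    rw [mul_assoc, hx]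
  -- ∫ g λ Tv ≤ ∫ g |Tv|
  have hv : ∫ x, g x * lam x * T v x ∂μ ≤ ∫ x, g x * |T v x| ∂μ := by
    refine integral_mono_ae (hint v) (hTint v) ?_
    filter_upwards [hlam1, hg] with x h1 h0
    calc g x * lam x * T v x ≤ |g x * lam x * T v x| := le_abs_self _
      _ = g x * (|lam x| * |T v x|) := by
          rw [abs_mul, abs_mul, abs_of_nonneg h0, mul_assoc]
      _ ≤ g x * (1 * |T v x|) := by
          apply mul_le_mul_of_nonneg_left _ h0
          exact mul_le_mul_of_nonneg_right h1 (abs_nonneg _)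
      _ = g x * |T v x| := by ring
  rw [hsplit, hu] at key
  linarith [key]
end
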